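/- Let D be a totally unimodular real m×n matrix such that no index i is a loop (De_i ≠ 0 for every i) and no index i is a coloop (e_i ∉ B for every i), and suppose that 3x ∈ B_I for every x ∈ B_I^#. Then every entry of the orthogonal projection matrix P onto the cut space B lies in {−2/3, −1/3, 0, 1/3, 2/3}; every diagonal entry of P is 1/3 or 2/3; every nonzero off-diagonal entry of P is 1/3 or −1/3; and each row of P has exactly three nonzero entries. -/

import Mathlib

open Matrix

variable {m n : ℕ}

/-- The cycle space `Z = ker D`. -/
def cycleSpace (D : Matrix (Fin m) (Fin n) ℝ) : Submodule ℝ (Fin n → ℝ) :=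
  LinearMap.ker D.mulVecLin

/-- The cut space `B = Z^⊥`, the orthogonal complement of the cycle space with respect to the
standard inner product on `ℝⁿ`. -/
def cutSpace (D : Matrix (Fin m) (Fin n) ℝ) : Submodule ℝ (Fin n → ℝ) where
  carrier := {x | ∀ z ∈ cycleSpace D, x ⬝ᵥ z = 0}
  add_mem' := by
    intro a b ha hb z hz
    simp [add_dotProduct, ha z hz, hb z hz]
  zero_mem' := by
    intro z hz
    simp
  smul_mem' := by
    intro c a ha z hz
    simp [smul_dotProduct, ha z hz]

/-- The cycle lattice `Z_I = Z ∩ ℤⁿ`. -/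
def cycleLattice (D : Matrix (Fin m) (Fin n) ℝ) : Set (Fin n → ℝ) :=
  {x | x ∈ cycleSpace D ∧ ∀ i, ∃ k : ℤ, x i = (k : ℝ)}

/-- The cut lattice `B_I = B ∩ ℤⁿ`. -/
def cutLattice (D : Matrix (Fin m) (Fin n) ℝ) : Set (Fin n → ℝ) :=
  {x | x ∈ cutSpace D ∧ ∀ i, ∃ k : ℤ, x i = (k : ℝ)}

/-- The dual lattice `B_I^# = {x ∈ B : ⟨x,b⟩ ∈ ℤ for all b ∈ B_I}`. -/
def dualLattice (D : Matrix (Fin m) (Fin n) ℝ) : Set (Fin n → ℝ) :=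
  {x | x ∈ cutSpace D ∧ ∀ b ∈ cutLattice D, ∃ k : ℤ, x ⬝ᵥ b = (k : ℝ)}

/-- `P` is the orthogonal projection matrix onto the cut space `B`: `Px ∈ B` and
`x - Px ∈ B^⊥ = Z` for every `x`. -/
def IsCutProjection (D : Matrix (Fin m) (Fin n) ℝ) (P : Matrix (Fin n) (Fin n) ℝ) : Prop :=
  ∀ x : Fin n → ℝ, P.mulVec x ∈ cutSpace D ∧ x - P.mulVec x ∈ cycleSpace D

section aux
open Finset
variable {m n : ℕ}

lemma proj_fix (D : Matrix (Fin m) (Fin n) ℝ) (P : Matrix (Fin n) (Fin n) ℝ)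
    (hP : IsCutProjection D P) {b : Fin n → ℝ} (hb : b ∈ cutSpace D) :
    P.mulVec b = b := by
  have hz : b - P.mulVec b ∈ cycleSpace D := (hP b).2
  have h1 : b ⬝ᵥ (b - P.mulVec b) = 0 := hb _ hz
  have h2 : (P.mulVec b) ⬝ᵥ (b - P.mulVec b) = 0 := (hP b).1 _ hz
  have h3 : (b - P.mulVec b) ⬝ᵥ (b - P.mulVec b) = 0 := by
    rw [sub_dotProduct, h1, h2, sub_zero]
  have h4 := dotProduct_self_eq_zero.mp h3
  have := sub_eq_zero.mp h4
  exact this.symm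

lemma proj_symm_dot (D : Matrix (Fin m) (Fin n) ℝ) (P : Matrix (Fin n) (Fin n) ℝ)
    (hP : IsCutProjection D P) (x y : Fin n → ℝ) :
    P.mulVec x ⬝ᵥ y = x ⬝ᵥ P.mulVec y := by
  have h1 : P.mulVec x ⬝ᵥ (y - P.mulVec y) = 0 := (hP x).1 _ (hP y).2
  have h2 : P.mulVec y ⬝ᵥ (x - P.mulVec x) = 0 := (hP y).1 _ (hP x).2
  rw [dotProduct_sub] at h1 h2
  have e2 : x ⬝ᵥ P.mulVec y = P.mulVec x ⬝ᵥ P.mulVec y := by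
    rw [dotProduct_comm x, dotProduct_comm (P.mulVec x)]
    linarith
  linarith

lemma proj_symm (D : Matrix (Fin m) (Fin n) ℝ) (P : Matrix (Fin n) (Fin n) ℝ)
    (hP : IsCutProjection D P) (i j : Fin n) : P i j = P j i := by
  have := proj_symm_dot D P hP (Pi.single j 1) (Pi.single i 1)
  simpa [mulVec_single] using this

lemma proj_col_mem (D : Matrix (Fin m) (Fin n) ℝ) (P : Matrix (Fin n) (Fin n) ℝ)
    (hP : IsCutProjection D P)
    (hexp : ∀ x ∈ dualLattice D, (3 : ℝ) • x ∈ cutLattice D) (i j : Fin n) :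
    ∃ k : ℤ, 3 * P i j = (k : ℝ) := by
  have hcol : P.mulVec (Pi.single j 1) ∈ dualLattice D := by
    refine ⟨(hP _).1, fun b hb => ?_⟩
    have := proj_symm_dot D P hP (Pi.single j 1) b
    rw [proj_fix D P hP hb.1] at this
    rw [this]
    simpa using hb.2 j
  have := (hexp _ hcol).2 i
  obtain ⟨k, hk⟩ := this
  refine ⟨k, ?_⟩
  simpa [mulVec_single, mul_comm] using hk



lemma sq_le_two {x : ℤ} (h : x^2 ≤ 2) : x = -1 ∨ x = 0 ∨ x = 1 := by
  have h1 : -1 ≤ x := by nlinarith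
  have h2 : x ≤ 1 := by nlinarith
  omega

lemma sq_le_six {x : ℤ} (h : x^2 ≤ 6) : -2 ≤ x ∧ x ≤ 2 := by
  constructor <;> nlinarith

lemma int_row {n : ℕ} (i : Fin n) (a : Fin n → ℤ)
    (hsum : ∑ k, (a k)^2 = 3 * a i) (h0 : a i ≠ 0) (h3 : a i ≠ 3) :
    (∀ j, a j = -2 ∨ a j = -1 ∨ a j = 0 ∨ a j = 1 ∨ a j = 2) ∧
    (a i = 1 ∨ a i = 2) ∧ (∀ j, j ≠ i → (a j = -1 ∨ a j = 0 ∨ a j = 1)) ∧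
    (univ.filter fun j => a j ≠ 0).card = 3 := by
  have hnn : (0:ℤ) ≤ 3 * a i := by
    rw [← hsum]; exact Finset.sum_nonneg fun k _ => sq_nonneg _
  have hii : (a i)^2 ≤ 3 * a i := by
    rw [← hsum]
    exact Finset.single_le_sum (fun k _ => sq_nonneg (a k)) (mem_univ i)
  have hai : a i = 1 ∨ a i = 2 := by
    have h1 : 0 < a i := by omega
    have h2 : a i ≤ 3 := by nlinarith
    omega
  have hS : ∑ k ∈ univ.erase i, (a k)^2 = 2 := by
    rw [Finset.sum_erase_eq_sub (mem_univ i), hsum]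
    rcases hai with h | h <;> rw [h] <;> norm_num
  have hoff : ∀ j, j ≠ i → (a j = -1 ∨ a j = 0 ∨ a j = 1) := by
    intro j hj
    have hle : (a j)^2 ≤ 2 := by
      rw [← hS]
      exact Finset.single_le_sum (fun k _ => sq_nonneg (a k))
        (Finset.mem_erase.mpr ⟨hj, mem_univ j⟩)
    exact sq_le_two hle
  have hall : ∀ j, a j = -2 ∨ a j = -1 ∨ a j = 0 ∨ a j = 1 ∨ a j = 2 := by
    intro j
    have hle : (a j)^2 ≤ 6 := by
      have := Finset.single_le_sum (fun k (_ : k ∈ univ) => sq_nonneg (a k)) (mem_univ j)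
      omega
    have := sq_le_six hle
    omega
  refine ⟨hall, hai, hoff, ?_⟩
  have hterm : ∀ j ∈ univ.erase i, (a j)^2 = if a j ≠ 0 then 1 else 0 := by
    intro j hj
    rcases hoff j (Finset.mem_erase.mp hj).1 with h | h | h <;> simp [h]
  rw [Finset.sum_congr rfl hterm] at hS
  rw [Finset.sum_boole] at hS
  have h2 : ((univ.erase i).filter fun j => a j ≠ 0).card = 2 := by exact_mod_cast hS
  rw [Finset.filter_erase] at h2
  have hmem : i ∈ univ.filter fun j => a j ≠ 0 := by simp [h0]
  rw [Finset.card_erase_of_mem hmem] at h2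
  omega

lemma proj_idem_entry (D : Matrix (Fin m) (Fin n) ℝ) (P : Matrix (Fin n) (Fin n) ℝ)
    (hP : IsCutProjection D P) (i j : Fin n) :
    ∑ k, P i k * P k j = P i j := by
  have h := proj_fix D P hP (hP (Pi.single j 1)).1
  rw [mulVec_single] at h
  have := congrFun h i
  simp only [mulVec, dotProduct, mul_one] at this ⊢
  simpa using this

lemma proj_diag_eq (D : Matrix (Fin m) (Fin n) ℝ) (P : Matrix (Fin n) (Fin n) ℝ)
    (hP : IsCutProjection D P) (i : Fin n) :
    ∑ k, (P i k)^2 = P i i := by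
  have h := proj_idem_entry D P hP i i
  calc ∑ k, (P i k)^2 = ∑ k, P i k * P k i := by
        refine Finset.sum_congr rfl fun k _ => ?_
        rw [sq, proj_symm D P hP k i]
    _ = P i i := h

end aux

open Finset in
/-- if `D` is totally unimodular with no loops and no coloops, and `3x ∈ B_I` for
all `x ∈ B_I^#`, then the entries of the projection `P` lie in `{±2/3, ±1/3, 0}`, the diagonal
entries are `1/3` or `2/3`, the nonzero off-diagonal entries are `±1/3`, and each row of `P`
has exactly three nonzero entries. -/
theorem stmt16 (m n : ℕ) (D : Matrix (Fin m) (Fin n) ℝ)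
    (hTU : D.IsTotallyUnimodular)
    (hloop : ∀ i : Fin n, D.mulVec (Pi.single i (1 : ℝ)) ≠ 0)
    (hcoloop : ∀ i : Fin n, Pi.single i (1 : ℝ) ∉ cutSpace D)
    (hexp : ∀ x ∈ dualLattice D, (3 : ℝ) • x ∈ cutLattice D)
    (P : Matrix (Fin n) (Fin n) ℝ) (hP : IsCutProjection D P) :
    (∀ i j : Fin n,
        P i j = -(2/3) ∨ P i j = -(1/3) ∨ P i j = 0 ∨ P i j = 1/3 ∨ P i j = 2/3) ∧
    (∀ i : Fin n, P i i = 1/3 ∨ P i i = 2/3) ∧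
    (∀ i j : Fin n, i ≠ j → P i j ≠ 0 → P i j = 1/3 ∨ P i j = -(1/3)) ∧
    (∀ i : Fin n, (univ.filter fun j => P i j ≠ 0).card = 3) := by
  have hint : ∀ i j : Fin n, ∃ k : ℤ, 3 * P i j = (k : ℝ) :=
    fun i j => proj_col_mem D P hP hexp i j
  choose a ha using hint
  have hdiagR : ∀ i, ∑ k, (P i k)^2 = P i i := proj_diag_eq D P hP
  have hsumZ : ∀ i, ∑ k, (a i k)^2 = 3 * a i i := by
    intro i
    have hcast : ((∑ k, (a i k)^2 : ℤ) : ℝ) = ((3 * a i i : ℤ) : ℝ) := by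
      push_cast
      calc (∑ k, ((a i k : ℝ))^2) = ∑ k, (3 * P i k)^2 :=
            Finset.sum_congr rfl fun k _ => by rw [ha i k]
        _ = 9 * ∑ k, (P i k)^2 := by
            rw [Finset.mul_sum]
            exact Finset.sum_congr rfl fun k _ => by ring
        _ = 3 * (3 * P i i) := by rw [hdiagR i]; ring
        _ = 3 * (a i i : ℝ) := by rw [ha i i]
    exact_mod_cast hcast
  have h0 : ∀ i, a i i ≠ 0 := by
    intro i h
    have hPii : P i i = 0 := by
      have h' := ha i i; rw [h] at h'; push_cast at h'; linarith
    have hrow0 : ∀ k, P i k = 0 := by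
      intro k
      have hnn : ∀ k ∈ Finset.univ, (0:ℝ) ≤ (P i k)^2 := fun k _ => sq_nonneg _
      have hz := (Finset.sum_eq_zero_iff_of_nonneg hnn).mp
        (by rw [hdiagR i, hPii]) k (Finset.mem_univ k)
      exact pow_eq_zero_iff two_ne_zero |>.mp hz
    have hcol0 : P.mulVec (Pi.single i 1) = 0 := by
      ext k
      simp [mulVec_single, proj_symm D P hP k i, hrow0 k]
    have hmem := (hP (Pi.single i 1)).2
    rw [hcol0, sub_zero] at hmem
    exact hloop i (by simpa [cycleSpace, mulVecLin_apply] using hmem)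
  have h3 : ∀ i, a i i ≠ 3 := by
    intro i h
    have hPii : P i i = 1 := by
      have h' := ha i i; rw [h] at h'; push_cast at h'; linarith
    set c := P.mulVec (Pi.single i 1) with hc
    have hci : c i = P i i := by simp [hc, mulVec_single]
    have hcc : c ⬝ᵥ c = P i i := by
      have hstep : c ⬝ᵥ c = ∑ k, (P i k)^2 := by
        simp only [dotProduct, hc, mulVec_single, mul_one, Pi.smul_apply, op_smul_eq_mul, col_apply]
        exact Finset.sum_congr rfl fun k _ => by rw [proj_symm D P hP k i]; ring
      rw [hstep, hdiagR i]
    have hsc : Pi.single i (1:ℝ) ⬝ᵥ c = P i i := by simp [hci]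
    have hnorm : (Pi.single i (1:ℝ) - c) ⬝ᵥ (Pi.single i (1:ℝ) - c) = 0 := by
      rw [sub_dotProduct, dotProduct_sub, dotProduct_sub]
      have h1 : Pi.single i (1:ℝ) ⬝ᵥ Pi.single i 1 = 1 := by simp
      have h2 : c ⬝ᵥ Pi.single i (1:ℝ) = P i i := by rw [dotProduct_comm]; exact hsc
      rw [h1, hsc, h2, hcc, hPii]; ring
    have heq : Pi.single i (1:ℝ) = c := sub_eq_zero.mp (dotProduct_self_eq_zero.mp hnorm)
    exact hcoloop i (heq ▸ (hP (Pi.single i 1)).1)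
  have key := fun i => int_row i (a i) (hsumZ i) (h0 i) (h3 i)
  have hPval : ∀ i j, P i j = (a i j : ℝ) / 3 := by
    intro i j; have := ha i j; linarith
  refine ⟨?_, ?_, ?_, ?_⟩
  · intro i j
    have hv := hPval i j
    rcases (key i).1 j with h|h|h|h|h <;> rw [h] at hv <;> push_cast at hv <;> norm_num [hv]
  · intro i
    have hv := hPval i i
    rcases (key i).2.1 with h|h <;> rw [h] at hv <;> push_cast at hv <;> norm_num [hv]
  · intro i j hij hne
    rcases (key i).2.2.1 j (Ne.symm hij) with h|h|h
    · right; rw [hPval i j, h]; norm_num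
    · exact absurd (by rw [hPval i j, h]; norm_num) hne
    · left; rw [hPval i j, h]; norm_num
  · intro i
    have hfe : (univ.filter fun j => P i j ≠ 0) = (univ.filter fun j => a i j ≠ 0) := by
      refine Finset.filter_congr fun j _ => ?_
      rw [hPval i j]
      constructor
      · intro hne hz; exact hne (by rw [hz]; norm_num)
      · intro hne hz
        apply hne
        have : (a i j : ℝ) = 0 := by
          field_simp at hz
          exact_mod_cast hz
        exact_mod_cast this
    rw [hfe]
    exact (key i).2.2.2
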